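/- Let (S,+) be an infinite semigroup with no idempotent that is both left weakly cancellative and right cancellative, and let ⟨x_n⟩_{n=1}^∞ be a sequence in S. Then there exists a sum subsystem ⟨y_n⟩_{n=1}^∞ of ⟨x_n⟩_{n=1}^∞ satisfying uniqueness of finite sums, i.e. for all nonempty finite H₁, H₂ ⊆ ℕ with H₁ ≠ H₂ one has ∑_{n∈H₁} y_n ≠ ∑_{n∈H₂} y_n. -/

import Mathlib

/-- Sum of `x` over the finite set `H ⊆ ℕ`, taken in increasing order of indices
(with junk value `x 0` when `H = ∅`). -/
def ordSum {S : Type*} [Add S] (x : ℕ → S) (H : Finset ℕ) : S :=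
  match H.sort (· ≤ ·) with
  | [] => x 0
  | h :: t => t.foldl (fun s n => s + x n) (x h)

namespace Stmt2Aux

variable {S : Type*} [AddSemigroup S]

def listSum (x : ℕ → S) (l : List ℕ) : S :=
  match l with
  | [] => x 0
  | h :: t => t.foldl (fun s n => s + x n) (x h)

lemma ordSum_eq (x : ℕ → S) (H : Finset ℕ) : ordSum x H = listSum x (H.sort (· ≤ ·)) := rfl

lemma foldl_congr (x x' : ℕ → S) (t : List ℕ) (s s' : S) (hs : s = s')
    (h : ∀ i ∈ t, x i = x' i) :
    t.foldl (fun s n => s + x n) s = t.foldl (fun s n => s + x' n) s' := by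
  induction t generalizing s s' with
  | nil => simpa using hs
  | cons a t ih =>
    simp only [List.foldl_cons]
    exact ih _ _ (by rw [hs, h a (by simp)]) (fun i hi => h i (by simp [hi]))

lemma listSum_congr (x x' : ℕ → S) (l : List ℕ) (hl : l ≠ []) (h : ∀ i ∈ l, x i = x' i) :
    listSum x l = listSum x' l := by
  cases l with
  | nil => exact absurd rfl hl
  | cons a t => exact foldl_congr x x' t _ _ (h a (by simp)) (fun i hi => h i (by simp [hi]))

lemma sort_ne_nil {H : Finset ℕ} (hH : H.Nonempty) : H.sort (· ≤ ·) ≠ [] := by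
  intro hemp
  obtain ⟨a, ha⟩ := hH
  have : a ∈ H.sort (· ≤ ·) := (Finset.mem_sort (α := ℕ) (· ≤ ·)).mpr ha
  rw [hemp] at this
  simp at this

lemma ordSum_congr (x x' : ℕ → S) {H : Finset ℕ} (hH : H.Nonempty) (h : ∀ i ∈ H, x i = x' i) :
    ordSum x H = ordSum x' H := by
  rw [ordSum_eq, ordSum_eq]
  exact listSum_congr x x' _ (sort_ne_nil hH)
    (fun i hi => h i ((Finset.mem_sort (α := ℕ) (· ≤ ·)).mp hi))

lemma listSum_append_singleton (x : ℕ → S) (l : List ℕ) (hl : l ≠ []) (n : ℕ) :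
    listSum x (l ++ [n]) = listSum x l + x n := by
  cases l with
  | nil => exact absurd rfl hl
  | cons a t => simp [listSum, List.foldl_append]

lemma sort_append_max {H : Finset ℕ} {n : ℕ} (h : ∀ a ∈ H, a < n) :
    (insert n H).sort (· ≤ ·) = H.sort (· ≤ ·) ++ [n] := by
  refine (fun hp hs => List.Perm.eq_of_pairwise' (Finset.pairwise_sort _ _) hs hp) ?_ ?_
  · have hn : n ∉ H := fun hn => lt_irrefl n (h n hn)
    have p1 : (n :: H.sort (· ≤ ·)).Perm (H.sort (· ≤ ·) ++ [n]) :=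
      (List.perm_append_singleton _ _).symm
    refine List.Perm.trans ?_ p1
    rw [← Multiset.coe_eq_coe, ← Multiset.cons_coe, Finset.sort_eq, Finset.sort_eq,
      Finset.insert_val_of_notMem hn]
  · rw [List.pairwise_append]
    refine ⟨Finset.pairwise_sort _ _, by simp, ?_⟩
    intro a ha b hb
    simp only [List.mem_singleton] at hb
    subst hb
    exact (h a ((Finset.mem_sort (α := ℕ) (· ≤ ·)).mp ha)).le

lemma ordSum_insert_max (x : ℕ → S) {H : Finset ℕ} (hH : H.Nonempty) {n : ℕ}
    (h : ∀ a ∈ H, a < n) :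
    ordSum x (insert n H) = ordSum x H + x n := by
  rw [ordSum_eq, ordSum_eq, sort_append_max h, listSum_append_singleton _ _ (sort_ne_nil hH)]

lemma ordSum_singleton (x : ℕ → S) (n : ℕ) : ordSum x {n} = x n := by
  rw [ordSum_eq]
  simp [listSum, Finset.sort_singleton]


variable (hlwc : ∀ a b : S, {x : S | a + x = b}.Finite)
    (hrc : ∀ a b : S, {x : S | x + a = b}.Subsingleton)
    (hni : ∀ s : S, s + s ≠ s)

include hrc hni in
/-- no `u` with `u + s = s`. -/
lemma no_left_unit (u s : S) (h : u + s = s) : False := by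
  have h2 : (u + u) + s = s := by rw [add_assoc, h, h]
  exact hni u (hrc s s h2 h)

/-- `r+1`-fold sum of `t`. -/
def pw (t : S) : ℕ → S
  | 0 => t
  | n + 1 => pw t n + t

lemma pw_add (t : S) (a b : ℕ) : pw t (a + b + 1) = pw t a + pw t b := by
  induction b with
  | zero => rfl
  | succ b ih =>
    show pw t (a + b + 1) + t = _
    rw [ih, add_assoc]
    rfl

include hlwc hrc hni in
lemma no_right_fixed (a t : S) (h : a + t = a) : False := by
  have hr : ∀ r, a + pw t r = a := by
    intro r
    induction r with
    | zero => exact h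
    | succ r ih =>
      show a + (pw t r + t) = a
      rw [← add_assoc, ih, h]
  have hfin : {x : S | a + x = a}.Finite := hlwc a a
  have : Finite ↥{x : S | a + x = a} := hfin.to_subtype
  obtain ⟨r, s, hrs, heq⟩ := Finite.exists_ne_map_eq_of_infinite
    (fun r : ℕ => (⟨pw t r, hr r⟩ : {x : S | a + x = a}))
  simp only [Subtype.mk.injEq] at heq
  rcases hrs.lt_or_gt with h1 | h1
  · have : pw t (s - r - 1 + r + 1) = pw t r := by
      rw [show s - r - 1 + r + 1 = s by omega, heq]
    rw [pw_add] at this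
    exact no_left_unit hrc hni _ _ this
  · have : pw t (r - s - 1 + s + 1) = pw t s := by
      rw [show r - s - 1 + s + 1 = r by omega, ← heq]
    rw [pw_add] at this
    exact no_left_unit hrc hni _ _ this

/-- partial sums of `x` starting at `m`. -/
def psum (x : ℕ → S) (m : ℕ) : ℕ → S
  | 0 => x m
  | k + 1 => psum x m k + x (m + k + 1)

lemma psum_eq_ordSum (x : ℕ → S) (m k : ℕ) : psum x m k = ordSum x (Finset.Icc m (m + k)) := by
  induction k with
  | zero => simp [psum, ordSum_singleton]
  | succ k ih =>
    have hins : Finset.Icc m (m + (k + 1)) = insert (m + k + 1) (Finset.Icc m (m + k)) := by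
      ext a
      simp only [Finset.mem_Icc, Finset.mem_insert]
      omega
    rw [hins, ordSum_insert_max x ⟨m, by simp⟩ (fun a ha => by
      simp only [Finset.mem_Icc] at ha; omega)]
    rw [← ih]
    rfl

include hlwc hrc hni in
lemma psum_injective (x : ℕ → S) (m : ℕ) : Function.Injective (psum x m) := by
  have key : ∀ j d : ℕ, ∃ T : S, psum x m (j + d + 1) = psum x m j + T := by
    intro j d
    induction d with
    | zero => exact ⟨x (m + j + 1), rfl⟩
    | succ d ih =>
      obtain ⟨T, hT⟩ := ih
      refine ⟨T + x (m + (j + d + 1) + 1), ?_⟩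
      show psum x m (j + d + 1) + x (m + (j + d + 1) + 1) = _
      rw [hT, add_assoc]
  intro j k hjk
  by_contra hne
  rcases Ne.lt_or_gt hne with h1 | h1
  · obtain ⟨T, hT⟩ := key j (k - j - 1)
    rw [show j + (k - j - 1) + 1 = k by omega, hjk] at hT
    exact no_right_fixed hlwc hrc hni _ _ hT.symm
  · obtain ⟨T, hT⟩ := key k (j - k - 1)
    rw [show k + (j - k - 1) + 1 = j by omega, ← hjk] at hT
    exact no_right_fixed hlwc hrc hni _ _ hT.symm

include hlwc hrc hni in
lemma exists_block (x : ℕ → S) (B : Set S) (hB : B.Finite) (m : ℕ) :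
    ∃ H : Finset ℕ, H.Nonempty ∧ (∀ a ∈ H, m ≤ a) ∧ ordSum x H ∉ B := by
  have hpre : {k : ℕ | psum x m k ∈ B}.Finite :=
    Set.Finite.preimage (Function.Injective.injOn (psum_injective hlwc hrc hni x m)) hB
  obtain ⟨k, hk⟩ := hpre.exists_notMem
  refine ⟨Finset.Icc m (m + k), ⟨m, by simp⟩, fun a ha => (Finset.mem_Icc.mp ha).1, ?_⟩
  rw [← psum_eq_ordSum]
  exact hk


/-- The finite set of "bad" values to avoid when choosing `y n`. -/
def bad (y : ℕ → S) (n : ℕ) : Set S :=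
  {s | ∃ K : Finset ℕ, K ⊆ Finset.range n ∧ K.Nonempty ∧
    (s = ordSum y K ∨ ∃ H : Finset ℕ, H ⊆ Finset.range n ∧ H.Nonempty ∧
      ordSum y H + s = ordSum y K)}

lemma bad_finite (hlwc : ∀ a b : S, {x : S | a + x = b}.Finite) (y : ℕ → S) (n : ℕ) :
    (bad y n).Finite := by
  have hsub : bad y n ⊆ ⋃ K ∈ (Finset.range n).powerset,
      ({ordSum y K} ∪ ⋃ H ∈ (Finset.range n).powerset, {x | ordSum y H + x = ordSum y K}) := by
    rintro s ⟨K, hK, -, h | ⟨H, hH, -, h⟩⟩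
    · exact Set.mem_biUnion (Finset.mem_powerset.mpr hK) (Or.inl h)
    · exact Set.mem_biUnion (Finset.mem_powerset.mpr hK)
        (Or.inr (Set.mem_biUnion (Finset.mem_powerset.mpr hH) h))
  refine Set.Finite.subset ?_ hsub
  refine Set.Finite.biUnion (Finset.finite_toSet _) (fun K _ => ?_)
  refine Set.Finite.union (Set.finite_singleton _) ?_
  exact Set.Finite.biUnion (Finset.finite_toSet _) (fun H _ => hlwc _ _)

lemma bad_mono_congr (y y' : ℕ → S) (n : ℕ) (h : ∀ i < n, y i = y' i) :
    bad y n ⊆ bad y' n := by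
  have hsum : ∀ K : Finset ℕ, K ⊆ Finset.range n → K.Nonempty → ordSum y K = ordSum y' K :=
    fun K hK hKn => ordSum_congr y y' hKn (fun i hi => h i (Finset.mem_range.mp (hK hi)))
  rintro s ⟨K, hK, hKn, hcase⟩
  refine ⟨K, hK, hKn, ?_⟩
  rcases hcase with h1 | ⟨H, hH, hHn, h1⟩
  · exact Or.inl (h1.trans (hsum K hK hKn))
  · exact Or.inr ⟨H, hH, hHn, by rw [← hsum H hH hHn, ← hsum K hK hKn]; exact h1⟩

lemma bad_congr (y y' : ℕ → S) (n : ℕ) (h : ∀ i < n, y i = y' i) :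
    bad y n = bad y' n :=
  Set.Subset.antisymm (bad_mono_congr y y' n h)
    (bad_mono_congr y' y n (fun i hi => (h i hi).symm))

open Classical in
noncomputable def pickH (x : ℕ → S) (B : Set S) (m : ℕ) : Finset ℕ :=
  if h : ∃ H : Finset ℕ, H.Nonempty ∧ (∀ a ∈ H, m ≤ a) ∧ ordSum x H ∉ B then h.choose else ∅

include hlwc hrc hni in
lemma pickH_spec (x : ℕ → S) (B : Set S) (hB : B.Finite) (m : ℕ) :
    (pickH x B m).Nonempty ∧ (∀ a ∈ pickH x B m, m ≤ a) ∧ ordSum x (pickH x B m) ∉ B := by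
  have hex := exists_block hlwc hrc hni x B hB m
  rw [pickH, dif_pos hex]
  exact hex.choose_spec

def bound (prev : List (Finset ℕ)) : ℕ := (prev.foldr (· ∪ ·) ∅).sup id + 1

lemma lt_bound_of_mem {prev : List (Finset ℕ)} {H : Finset ℕ} (hH : H ∈ prev) {a : ℕ}
    (ha : a ∈ H) : a < bound prev := by
  have : a ∈ prev.foldr (· ∪ ·) ∅ := by
    induction prev with
    | nil => simp at hH
    | cons K t ih =>
      rcases List.mem_cons.mp hH with rfl | hmem
      · exact Finset.mem_union_left _ ha
      · exact Finset.mem_union_right _ (ih hmem)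
  have h2 := Finset.le_sup (f := id) this
  simp only [id] at h2
  rw [bound]
  omega

noncomputable def nextB (x : ℕ → S) (prev : List (Finset ℕ)) : Finset ℕ :=
  pickH x (bad (fun i => ordSum x (prev.getD i ∅)) prev.length) (bound prev)

noncomputable def buildList (x : ℕ → S) : ℕ → List (Finset ℕ)
  | 0 => []
  | n + 1 => buildList x n ++ [nextB x (buildList x n)]

noncomputable def HsF (x : ℕ → S) (n : ℕ) : Finset ℕ := nextB x (buildList x n)

noncomputable def yF (x : ℕ → S) (n : ℕ) : S := ordSum x (HsF x n)

lemma buildList_length (x : ℕ → S) (n : ℕ) : (buildList x n).length = n := by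
  induction n with
  | zero => rfl
  | succ n ih => simp [buildList, ih]

lemma buildList_getD (x : ℕ → S) (n i : ℕ) (hi : i < n) :
    (buildList x n).getD i ∅ = HsF x i := by
  induction n with
  | zero => omega
  | succ n ih =>
    rcases Nat.lt_or_ge i n with h1 | h1
    · rw [buildList, List.getD_append _ _ _ _ (by rw [buildList_length]; omega)]
      exact ih h1
    · have : i = n := by omega
      subst this
      rw [buildList, List.getD_eq_getElem?_getD, List.getElem?_append_right
        (by rw [buildList_length])]
      simp [buildList_length, HsF]

lemma HsF_eq (x : ℕ → S) (n : ℕ) :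
    HsF x n = pickH x (bad (yF x) n) (bound (buildList x n)) := by
  rw [HsF, nextB, buildList_length]
  congr 1
  refine bad_congr _ _ n (fun i hi => ?_)
  rw [buildList_getD x n i hi]
  rfl

include hlwc hrc hni in
lemma HsF_spec (x : ℕ → S) (n : ℕ) :
    (HsF x n).Nonempty ∧ (∀ a ∈ HsF x n, bound (buildList x n) ≤ a) ∧
      yF x n ∉ bad (yF x) n := by
  have := pickH_spec hlwc hrc hni x (bad (yF x) n) (bad_finite hlwc _ n)
    (bound (buildList x n))
  rw [← HsF_eq] at this
  exact ⟨this.1, this.2.1, by rw [yF]; exact this.2.2⟩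


include hlwc hrc hni in
lemma distinct (x : ℕ → S) : ∀ n (H₁ H₂ : Finset ℕ), H₁ ⊆ Finset.range n →
    H₂ ⊆ Finset.range n → H₁.Nonempty → H₂.Nonempty → H₁ ≠ H₂ →
    ordSum (yF x) H₁ ≠ ordSum (yF x) H₂ := by
  intro n
  induction n with
  | zero =>
    intro H₁ H₂ h1 _ hn1 _ _
    obtain ⟨a, ha⟩ := hn1
    have := h1 ha
    simp at this
  | succ n ih =>
    intro H₁ H₂ h1 h2 hn1 hn2 hne heq
    set y := yF x with hy
    have yspec := HsF_spec hlwc hrc hni x n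
    have herase_sub : ∀ {H : Finset ℕ}, H ⊆ Finset.range (n + 1) →
        H.erase n ⊆ Finset.range n := by
      intro H hH a ha
      have h3 := Finset.mem_range.mp (hH (Finset.mem_of_mem_erase ha))
      have h4 := Finset.ne_of_mem_erase ha
      exact Finset.mem_range.mpr (by omega)
    have hsum_erase : ∀ {H : Finset ℕ}, H ⊆ Finset.range (n + 1) → n ∈ H →
        (H.erase n).Nonempty → ordSum y H = ordSum y (H.erase n) + y n := by
      intro H hH hnH hne'
      conv_lhs => rw [← Finset.insert_erase hnH]
      exact ordSum_insert_max y hne' (fun a ha =>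
        Nat.lt_of_le_of_ne (by
          have := Finset.mem_range.mp (hH (Finset.mem_of_mem_erase ha)); omega)
          (Finset.ne_of_mem_erase ha))
    have hsingleton : ∀ {H : Finset ℕ}, n ∈ H → ¬(H.erase n).Nonempty → H = {n} := by
      intro H hnH hne'
      have he : H.erase n = ∅ := Finset.not_nonempty_iff_eq_empty.mp hne'
      ext a
      simp only [Finset.mem_singleton]
      constructor
      · intro ha
        by_contra hcon
        have : a ∈ H.erase n := Finset.mem_erase.mpr ⟨hcon, ha⟩
        rw [he] at this
        simp at this
      · rintro rfl; exact hnH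
    have hnotin_sub : ∀ {H : Finset ℕ}, H ⊆ Finset.range (n + 1) → n ∉ H →
        H ⊆ Finset.range n := by
      intro H hH hnH a ha
      have := Finset.mem_range.mp (hH ha)
      exact Finset.mem_range.mpr (Nat.lt_of_le_of_ne (by omega)
        (fun hcon => hnH (hcon ▸ ha)))
    by_cases e1 : n ∈ H₁ <;> by_cases e2 : n ∈ H₂
    · by_cases ne1 : (H₁.erase n).Nonempty <;> by_cases ne2 : (H₂.erase n).Nonempty
      · rw [hsum_erase h1 e1 ne1, hsum_erase h2 e2 ne2] at heq
        have hcancel := hrc (y n) (ordSum y (H₂.erase n) + y n) heq rfl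
        exact ih _ _ (herase_sub h1) (herase_sub h2) ne1 ne2
          (fun hcon => hne (by rw [← Finset.insert_erase e1, ← Finset.insert_erase e2, hcon]))
          hcancel
      · rw [hsum_erase h1 e1 ne1, hsingleton e2 ne2, ordSum_singleton] at heq
        exact no_left_unit hrc hni _ _ heq
      · rw [hsingleton e1 ne1, ordSum_singleton, hsum_erase h2 e2 ne2] at heq
        exact no_left_unit hrc hni _ _ heq.symm
      · exact hne ((hsingleton e1 ne1).trans (hsingleton e2 ne2).symm)
    · have h2' := hnotin_sub h2 e2
      by_cases ne1 : (H₁.erase n).Nonempty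
      · rw [hsum_erase h1 e1 ne1] at heq
        exact yspec.2.2 ⟨H₂, h2', hn2, Or.inr ⟨H₁.erase n, herase_sub h1, ne1, heq⟩⟩
      · rw [hsingleton e1 ne1, ordSum_singleton] at heq
        exact yspec.2.2 ⟨H₂, h2', hn2, Or.inl heq⟩
    · have h1' := hnotin_sub h1 e1
      by_cases ne2 : (H₂.erase n).Nonempty
      · rw [hsum_erase h2 e2 ne2] at heq
        exact yspec.2.2 ⟨H₁, h1', hn1, Or.inr ⟨H₂.erase n, herase_sub h2, ne2, heq.symm⟩⟩
      · rw [hsingleton e2 ne2, ordSum_singleton] at heq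
        exact yspec.2.2 ⟨H₁, h1', hn1, Or.inl heq.symm⟩
    · exact ih _ _ (hnotin_sub h1 e1) (hnotin_sub h2 e2) hn1 hn2 hne heq

end Stmt2Aux

/-- If `(S,+)` is an infinite left weakly cancellative and right
cancellative semigroup with no idempotent and `⟨x_n⟩` is a sequence in `S`, then there is
a sum subsystem `⟨y_n⟩` of `⟨x_n⟩` satisfying uniqueness of finite sums. -/
theorem stmt2 {S : Type*} [AddSemigroup S] [Infinite S]
    (hlwc : ∀ a b : S, {x : S | a + x = b}.Finite)
    (hrc : ∀ a b : S, {x : S | x + a = b}.Subsingleton)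
    (hni : ∀ s : S, s + s ≠ s)
    (x : ℕ → S) :
    ∃ (y : ℕ → S) (Hs : ℕ → Finset ℕ),
      -- `⟨y_n⟩` is a sum subsystem of `⟨x_n⟩`:
      (∀ n, (Hs n).Nonempty) ∧
      (∀ n, ∀ a ∈ Hs n, ∀ b ∈ Hs (n + 1), a < b) ∧
      (∀ n, y n = ordSum x (Hs n)) ∧
      -- `⟨y_n⟩` satisfies uniqueness of finite sums:
      (∀ H₁ H₂ : Finset ℕ, H₁.Nonempty → H₂.Nonempty →
        H₁ ≠ H₂ → ordSum y H₁ ≠ ordSum y H₂) := by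
  classical
  refine ⟨Stmt2Aux.yF x, Stmt2Aux.HsF x,
    fun n => (Stmt2Aux.HsF_spec hlwc hrc hni x n).1, ?_, fun n => rfl, ?_⟩
  · intro n a ha b hb
    have hbd := (Stmt2Aux.HsF_spec hlwc hrc hni x (n + 1)).2.1 b hb
    have hmem : Stmt2Aux.HsF x n ∈ Stmt2Aux.buildList x (n + 1) := by
      rw [Stmt2Aux.buildList]
      exact List.mem_append_right _ (by simp [Stmt2Aux.HsF])
    have hlt := Stmt2Aux.lt_bound_of_mem hmem ha
    omega
  · intro H₁ H₂ hn1 hn2 hne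
    set n := max (H₁.max' hn1) (H₂.max' hn2) + 1 with hn
    refine Stmt2Aux.distinct hlwc hrc hni x n H₁ H₂ ?_ ?_ hn1 hn2 hne
    · intro a ha
      have := Finset.le_max' H₁ a ha
      exact Finset.mem_range.mpr (by omega)
    · intro a ha
      have := Finset.le_max' H₂ a ha
      exact Finset.mem_range.mpr (by omega)
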